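/- The output λ_F of the adapted firm-copies-proposing deferred acceptance algorithm in the associated one-to-one market is individually rational*: every worker weakly prefers her assignment to being unmatched, every firm-copy weakly prefers its assignment to being unmatched, and no matched firm-copy envies the worker matched to another copy of the same firm. -/

import Mathlib

open Classical

noncomputable section

/- The associated one-to-one market: firm `i : ι` has copies indexed by
`Fin (J i)`; firm-copies have linear preferences `Pf f` over `Option W`
(`none` = `∅`, larger = better); workers have linear preferences `Pw w` over
`Option (Σ i, Fin (J i))`, which refine a linear preference `PwFirm w` over the
firms (`Option ι`): all copies of a preferred firm rank above all copies of a
less preferred firm, and copies of the same firm are ranked by index. -/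

/-- The best element of a finite set of alternatives (`none` included) with
respect to a linear order `L`. -/
def bestOf {α : Type*} (L : LinearOrder (Option α)) (s : Finset (Option α)) :
    Option α :=
  WithBot.unbotD none (@Finset.max (Option α) L s)

/-- State of the deferred acceptance algorithm: the current tentative matching
(from the firm-copies' side) and, for each firm-copy, the set of workers that
have rejected it so far. -/
structure DAState (ι W : Type*) (J : ι → ℕ) where
  lam : (Σ i : ι, Fin (J i)) → Option W
  rej : (Σ i : ι, Fin (J i)) → Finset W

variable {ι W : Type*} [Fintype ι] [DecidableEq ι] [Fintype W] [DecidableEq W]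
  {J : ι → ℕ}

/-- The offer made by firm-copy `f` at the current stage: if `f` is unmatched,
it targets its best acceptable worker among those who have not rejected it yet,
and it is *authorized* to make this offer only if no other copy of the same
firm currently holds a worker that `f` strictly prefers. -/
def proposalF [Fintype ι] [∀ i : ι, Fintype (Fin (J i))]
    (Pf : (Σ i : ι, Fin (J i)) → LinearOrder (Option W))
    (st : DAState ι W J) (f : Σ i : ι, Fin (J i)) : Option W :=
  if st.lam f ≠ none then none
  else
    match bestOf (Pf f)
        (insert none ((Finset.univ.filter (fun w : W => w ∉ st.rej f)).image some)) with
    | none => none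
    | some w =>
        if ∀ (j' : Fin (J f.1)) (w' : W),
            st.lam ⟨f.1, j'⟩ = some w' → ¬ (Pf f).lt (some w) (some w')
        then some w else none

/-- The firm-copy (if any) tentatively selected by worker `w`: the best, with
respect to `Pw w`, among the copies currently offering to `w`, her current
partner, and `∅`. -/
def chosenByWorker
    (Pf : (Σ i : ι, Fin (J i)) → LinearOrder (Option W))
    (Pw : W → LinearOrder (Option (Σ i : ι, Fin (J i))))
    (st : DAState ι W J) (w : W) : Option (Σ i : ι, Fin (J i)) :=
  bestOf (Pw w)
    (insert none
      ((Finset.univ.filter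
        (fun f : Σ i : ι, Fin (J i) =>
          proposalF Pf st f = some w ∨ st.lam f = some w)).image some))

/-- One stage of the adapted firm-copies-proposing deferred acceptance
algorithm. -/
def stepF
    (Pf : (Σ i : ι, Fin (J i)) → LinearOrder (Option W))
    (Pw : W → LinearOrder (Option (Σ i : ι, Fin (J i))))
    (st : DAState ι W J) : DAState ι W J where
  lam := fun f =>
    if h : ∃ w : W, chosenByWorker Pf Pw st w = some f then some h.choose
    else none
  rej := fun f =>
    st.rej f ∪
      Finset.univ.filter
        (fun w : W =>
          (proposalF Pf st f = some w ∨ st.lam f = some w) ∧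
            chosenByWorker Pf Pw st w ≠ some f)

/-- The output `λ_F` of the adapted firm-copies-proposing deferred acceptance
algorithm (run for sufficiently many stages so that it has terminated). -/
def daOutputF
    (Pf : (Σ i : ι, Fin (J i)) → LinearOrder (Option W))
    (Pw : W → LinearOrder (Option (Σ i : ι, Fin (J i)))) :
    (Σ i : ι, Fin (J i)) → Option W :=
  ((stepF Pf Pw)^[(Fintype.card (Σ i : ι, Fin (J i)) * Fintype.card W + 1) *
      (Fintype.card (Σ i : ι, Fin (J i)) + Fintype.card W + 2)]
    ⟨fun _ => none, fun _ => ∅⟩).lam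

/-- The worker-side of the output matching. -/
def daOutputFW
    (Pf : (Σ i : ι, Fin (J i)) → LinearOrder (Option W))
    (Pw : W → LinearOrder (Option (Σ i : ι, Fin (J i)))) (w : W) :
    Option (Σ i : ι, Fin (J i)) :=
  if h : ∃ f : Σ i : ι, Fin (J i), daOutputF Pf Pw f = some w then some h.choose
  else none


set_option linter.unusedSectionVars false



/-! ### Auxiliary machinery for the proof -/

lemma DAaux.bestOf_mem {α : Type*} (L : LinearOrder (Option α))
    (s : Finset (Option α)) (hn : (none : Option α) ∈ s) : bestOf L s ∈ s := by
  letI := L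
  have hs : s.Nonempty := ⟨_, hn⟩
  rw [bestOf, ← Finset.coe_max' hs, WithBot.unbotD_coe]
  exact s.max'_mem hs

lemma DAaux.le_bestOf {α : Type*} (L : LinearOrder (Option α))
    (s : Finset (Option α)) (hn : (none : Option α) ∈ s) {x : Option α}
    (hx : x ∈ s) : L.le x (bestOf L s) := by
  letI := L
  have hs : s.Nonempty := ⟨_, hn⟩
  rw [bestOf, ← Finset.coe_max' hs, WithBot.unbotD_coe]
  exact s.le_max' x hx

/-- The partner of a worker in a state. -/
def DAaux.partnerSt (st : DAState ι W J) (w : W) : Option (Σ i : ι, Fin (J i)) :=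
  if h : ∃ f : Σ i : ι, Fin (J i), st.lam f = some w then some h.choose else none

/-- The state sequence of the algorithm. -/
def DAaux.stSeq (Pf : (Σ i : ι, Fin (J i)) → LinearOrder (Option W))
    (Pw : W → LinearOrder (Option (Σ i : ι, Fin (J i)))) (k : ℕ) :
    DAState ι W J :=
  (stepF Pf Pw)^[k] ⟨fun _ => none, fun _ => ∅⟩

section Aux

variable (Pf : (Σ i : ι, Fin (J i)) → LinearOrder (Option W))
  (Pw : W → LinearOrder (Option (Σ i : ι, Fin (J i))))

open DAaux

lemma DAaux.stSeq_succ (k : ℕ) :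
    stSeq Pf Pw (k + 1) = stepF Pf Pw (stSeq Pf Pw k) :=
  Function.iterate_succ_apply' _ _ _

lemma DAaux.proposal_lam_none {st : DAState ι W J} {f : Σ i : ι, Fin (J i)}
    {w : W} (h : proposalF Pf st f = some w) : st.lam f = none := by
  by_contra hne
  rw [proposalF, if_pos hne] at h
  exact absurd h (by simp)

lemma DAaux.proposal_spec {st : DAState ι W J} {f : Σ i : ι, Fin (J i)}
    {w : W} (h : proposalF Pf st f = some w) :
    st.lam f = none ∧ (Pf f).lt none (some w) ∧
    (∀ w' : W, w' ∉ st.rej f → (Pf f).le (some w') (some w)) ∧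
    (∀ (j' : Fin (J f.1)) (w' : W), st.lam ⟨f.1, j'⟩ = some w' →
      ¬ (Pf f).lt (some w) (some w')) := by
  have h0 : st.lam f = none := proposal_lam_none Pf h
  rw [proposalF, if_neg (by simp [h0])] at h
  set s := insert none ((Finset.univ.filter (fun w : W => w ∉ st.rej f)).image some) with hs
  have hns : (none : Option W) ∈ s := Finset.mem_insert_self _ _
  split at h
  next hb => exact absurd h (by simp)
  next w0 hb =>
    split_ifs at h with ha
    · injection h with h'
      subst h'
      refine ⟨h0, ?_, ?_, ha⟩
      · letI := Pf f
        have := le_bestOf (Pf f) s hns hns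
        rw [hb] at this
        exact lt_of_le_of_ne this (by simp)
      · intro w' hw'
        have hx : (some w' : Option W) ∈ s := by
          rw [hs]
          exact Finset.mem_insert_of_mem
            (Finset.mem_image_of_mem _ (Finset.mem_filter.2 ⟨Finset.mem_univ _, hw'⟩))
        have := le_bestOf (Pf f) s hns hx
        rwa [hb] at this

lemma DAaux.pred_unique {st : DAState ι W J} {f : Σ i : ι, Fin (J i)}
    {w w' : W}
    (h1 : proposalF Pf st f = some w ∨ st.lam f = some w)
    (h2 : proposalF Pf st f = some w' ∨ st.lam f = some w') : w = w' := by
  rcases h1 with h1 | h1 <;> rcases h2 with h2 | h2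
  · rw [h1] at h2; exact Option.some.inj h2
  · rw [proposal_lam_none Pf h1] at h2; exact absurd h2 (by simp)
  · rw [proposal_lam_none Pf h2] at h1; exact absurd h1 (by simp)
  · rw [h1] at h2; exact Option.some.inj h2

lemma DAaux.chosen_ge_none (st : DAState ι W J) (w : W) :
    (Pw w).le none (chosenByWorker Pf Pw st w) :=
  le_bestOf (Pw w) _ (Finset.mem_insert_self _ _) (Finset.mem_insert_self _ _)

lemma DAaux.chosen_ge_of_pred {st : DAState ι W J} {f : Σ i : ι, Fin (J i)}
    {w : W} (h : proposalF Pf st f = some w ∨ st.lam f = some w) :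
    (Pw w).le (some f) (chosenByWorker Pf Pw st w) :=
  le_bestOf (Pw w) _ (Finset.mem_insert_self _ _)
    (Finset.mem_insert_of_mem
      (Finset.mem_image_of_mem _ (Finset.mem_filter.2 ⟨Finset.mem_univ _, h⟩)))

lemma DAaux.chosen_some {st : DAState ι W J} {f : Σ i : ι, Fin (J i)} {w : W}
    (h : chosenByWorker Pf Pw st w = some f) :
    proposalF Pf st f = some w ∨ st.lam f = some w := by
  have hm := bestOf_mem (Pw w) _
    (Finset.mem_insert_self none
      ((Finset.univ.filter
        (fun f : Σ i : ι, Fin (J i) =>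
          proposalF Pf st f = some w ∨ st.lam f = some w)).image some))
  rw [chosenByWorker] at h
  rw [h] at hm
  simp only [Finset.mem_insert, Finset.mem_image, Finset.mem_filter,
    Finset.mem_univ, true_and] at hm
  rcases hm with hm | ⟨g, hg, hgf⟩
  · exact absurd hm (by simp)
  · injection hgf with h'; subst h'; exact hg

lemma DAaux.step_lam_iff (st : DAState ι W J) (f : Σ i : ι, Fin (J i)) (w : W) :
    (stepF Pf Pw st).lam f = some w ↔ chosenByWorker Pf Pw st w = some f := by
  constructor
  · intro h
    rw [stepF] at h
    simp only at h
    split_ifs at h with hex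
    injection h with h'
    rw [← h']
    exact hex.choose_spec
  · intro h
    have hex : ∃ w' : W, chosenByWorker Pf Pw st w' = some f := ⟨w, h⟩
    show (if h : ∃ w' : W, chosenByWorker Pf Pw st w' = some f then some h.choose
      else none) = some w
    rw [dif_pos hex]
    congr 1
    exact pred_unique Pf (chosen_some Pf Pw hex.choose_spec) (chosen_some Pf Pw h)

lemma DAaux.step_rej_iff (st : DAState ι W J) (f : Σ i : ι, Fin (J i)) (w : W) :
    w ∈ (stepF Pf Pw st).rej f ↔ w ∈ st.rej f ∨
      ((proposalF Pf st f = some w ∨ st.lam f = some w) ∧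
        chosenByWorker Pf Pw st w ≠ some f) := by
  simp [stepF, Finset.mem_union, Finset.mem_filter]

lemma DAaux.partnerSt_lam {st : DAState ι W J} {f : Σ i : ι, Fin (J i)} {w : W}
    (h : partnerSt st w = some f) : st.lam f = some w := by
  rw [partnerSt] at h
  split_ifs at h with hex
  injection h with h'; rw [← h']; exact hex.choose_spec

lemma DAaux.partnerSt_step (st : DAState ι W J) (w : W) :
    partnerSt (stepF Pf Pw st) w = chosenByWorker Pf Pw st w := by
  cases hc : chosenByWorker Pf Pw st w with
  | none =>
    rw [partnerSt, dif_neg]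
    rintro ⟨f, hf⟩
    rw [step_lam_iff] at hf
    rw [hf] at hc
    exact absurd hc (by simp)
  | some f =>
    have hf : (stepF Pf Pw st).lam f = some w := (step_lam_iff Pf Pw st f w).2 hc
    rw [partnerSt, dif_pos ⟨f, hf⟩]
    congr 1
    have h2 := (⟨f, hf⟩ : ∃ g : Σ i : ι, Fin (J i), (stepF Pf Pw st).lam g = some w).choose_spec
    rw [step_lam_iff] at h2
    rw [h2] at hc
    injection hc

lemma DAaux.partner_mono (st : DAState ι W J) (w : W) :
    (Pw w).le (partnerSt st w) (partnerSt (stepF Pf Pw st) w) := by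
  rw [partnerSt_step]
  cases hp : partnerSt st w with
  | none => exact chosen_ge_none Pf Pw st w
  | some f => exact chosen_ge_of_pred Pf Pw (Or.inr (partnerSt_lam hp))

lemma DAaux.partner_mono_le {k m : ℕ} (hkm : k ≤ m) (w : W) :
    (Pw w).le (partnerSt (stSeq Pf Pw k) w) (partnerSt (stSeq Pf Pw m) w) := by
  letI := Pw w
  induction m, hkm using Nat.le_induction with
  | base => exact le_refl _
  | succ m hkm ih =>
    refine le_trans ih ?_
    rw [stSeq_succ]
    exact partner_mono Pf Pw _ w

lemma DAaux.lam_IR (k : ℕ) (f : Σ i : ι, Fin (J i)) (w : W)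
    (h : (stSeq Pf Pw k).lam f = some w) : (Pf f).lt none (some w) := by
  induction k generalizing f w with
  | zero => exact absurd h (by simp [stSeq])
  | succ k ih =>
    rw [stSeq_succ, step_lam_iff] at h
    rcases chosen_some Pf Pw h with hp | hl
    · exact (proposal_spec Pf hp).2.1
    · exact ih f w hl

end Aux

/-- the output `λ_F` of the adapted firm-copies-proposing deferred
acceptance algorithm is individually rational*: every worker weakly prefers her
assignment to `∅`, every firm-copy weakly prefers its assignment to `∅`, and no
matched firm-copy envies the worker matched to another copy of the same firm. -/
theorem daOutputF_individuallyRationalStar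
    (Pf : (Σ i : ι, Fin (J i)) → LinearOrder (Option W))
    (Pw : W → LinearOrder (Option (Σ i : ι, Fin (J i))))
    (PwFirm : W → LinearOrder (Option ι))
    -- condition (1): copies of a more preferred firm rank above copies of a
    -- less preferred firm
    (hcond1 : ∀ (w : W) (i i' : ι) (j : Fin (J i)) (j' : Fin (J i')),
      (PwFirm w).lt (some i') (some i) →
        (Pw w).lt (some ⟨i', j'⟩) (some ⟨i, j⟩))
    -- condition (1) for ∅: a firm is acceptable iff its copies are
    (hcond0 : ∀ (w : W) (i : ι) (j : Fin (J i)),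
      ((PwFirm w).lt none (some i) ↔ (Pw w).lt none (some ⟨i, j⟩)))
    -- condition (2): copies of the same firm are ranked by index
    (hcond2 : ∀ (w : W) (i : ι) (j j' : Fin (J i)),
      ((Pw w).lt (some ⟨i, j'⟩) (some ⟨i, j⟩) ↔ (j : ℕ) < (j' : ℕ))) :
    -- every worker weakly prefers her assignment to being unmatched
    (∀ w : W, (Pw w).le none (daOutputFW Pf Pw w)) ∧
    -- every firm-copy weakly prefers its assignment to being unmatched
    (∀ f : Σ i : ι, Fin (J i), (Pf f).le none (daOutputF Pf Pw f)) ∧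
    -- no matched firm-copy envies another copy of the same firm
    (∀ (i : ι) (j j' : Fin (J i)), daOutputF Pf Pw ⟨i, j⟩ ≠ none →
      ¬ (Pf ⟨i, j⟩).lt (daOutputF Pf Pw ⟨i, j⟩) (daOutputF Pf Pw ⟨i, j'⟩)) := by
  classical
  obtain ⟨N, hN0, hout⟩ : ∃ N, 0 < N ∧ daOutputF Pf Pw = (DAaux.stSeq Pf Pw N).lam :=
    ⟨_, by positivity, rfl⟩
  refine ⟨?_, ?_, ?_⟩
  · -- workers weakly prefer their assignment to ∅
    intro w
    have key : ∀ (f : Σ i : ι, Fin (J i)) (w' : W), daOutputF Pf Pw f = some w' →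
        (Pw w').le none (some f) := by
      intro f w' hfw
      rw [hout] at hfw
      obtain ⟨M, hM⟩ : ∃ M, N = M + 1 := ⟨N - 1, by omega⟩
      rw [hM, DAaux.stSeq_succ, DAaux.step_lam_iff] at hfw
      have h2 := DAaux.chosen_ge_none Pf Pw (DAaux.stSeq Pf Pw M) w'
      rwa [hfw] at h2
    rw [daOutputFW]
    split_ifs with h
    · exact key _ _ h.choose_spec
    · exact (Pw w).le_refl none
  · -- firm-copies weakly prefer their assignment to ∅
    intro f
    rw [hout]
    cases h : (DAaux.stSeq Pf Pw N).lam f with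
    | none => exact (Pf f).le_refl none
    | some w => letI := Pf f; exact le_of_lt (DAaux.lam_IR Pf Pw N f w h)
  · -- no envy among copies of the same firm
    intro i j j' hne hlt
    rw [hout] at hne hlt
    obtain ⟨w, hw⟩ : ∃ w, (DAaux.stSeq Pf Pw N).lam ⟨i, j⟩ = some w := by
      cases h : (DAaux.stSeq Pf Pw N).lam ⟨i, j⟩ with
      | none => exact absurd h hne
      | some w => exact ⟨w, rfl⟩
    rw [hw] at hlt
    cases hj'2 : (DAaux.stSeq Pf Pw N).lam ⟨i, j'⟩ with
    | none =>
      rw [hj'2] at hlt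
      letI := Pf ⟨i, j⟩
      exact lt_asymm (DAaux.lam_IR Pf Pw N _ w hw) hlt
    | some w'' =>
      rw [hj'2] at hlt
      by_cases hjj : j = j'
      · subst hjj
        rw [hw] at hj'2
        rw [← Option.some.inj hj'2] at hlt
        letI := Pf ⟨i, j⟩
        exact lt_irrefl _ hlt
      by_cases hww : w = w''
      · subst hww
        letI := Pf ⟨i, j⟩
        exact lt_irrefl _ hlt
      -- the start of the final spell during which ⟨i,j⟩ holds w
      have hPN : ∀ m, N ≤ m → m ≤ N → (DAaux.stSeq Pf Pw m).lam ⟨i, j⟩ = some w :=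
        fun m h1 h2 => by rw [le_antisymm h2 h1]; exact hw
      have hPex : ∃ t, ∀ m, t ≤ m → m ≤ N →
          (DAaux.stSeq Pf Pw m).lam ⟨i, j⟩ = some w := ⟨N, hPN⟩
      have hT := Nat.find_spec hPex
      have hTN : Nat.find hPex ≤ N := Nat.find_min' hPex hPN
      have hT1 : 1 ≤ Nat.find hPex := by
        rcases Nat.eq_zero_or_pos (Nat.find hPex) with h0 | h1
        · exfalso
          have h2 := hT 0 (by omega) (by omega)
          simp [DAaux.stSeq] at h2
        · exact h1
      obtain ⟨S, hS⟩ : ∃ S, Nat.find hPex = S + 1 := ⟨Nat.find hPex - 1, by omega⟩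
      have hSbad : ¬ ∀ m, S ≤ m → m ≤ N → (DAaux.stSeq Pf Pw m).lam ⟨i, j⟩ = some w :=
        Nat.find_min hPex (by omega)
      push_neg at hSbad
      obtain ⟨m, hm1, hm2, hm3⟩ := hSbad
      have hmS : m = S := by
        by_contra hmc
        exact hm3 (hT m (by omega) hm2)
      subst hmS
      have hSltN : m < N := by
        rcases eq_or_lt_of_le hm2 with h | h
        · subst h; exact absurd hw hm3
        · exact h
      have hT' : (DAaux.stSeq Pf Pw (m + 1)).lam ⟨i, j⟩ = some w :=
        hT (m + 1) (by omega) (by omega)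
      rw [DAaux.stSeq_succ, DAaux.step_lam_iff] at hT'
      have hprop : proposalF Pf (DAaux.stSeq Pf Pw m) ⟨i, j⟩ = some w := by
        rcases DAaux.chosen_some Pf Pw hT' with hp | hl
        · exact hp
        · exact absurd hl hm3
      obtain ⟨hlam0, hIRw, hmax, hauth⟩ := DAaux.proposal_spec Pf hprop
      have hrej : w'' ∈ (DAaux.stSeq Pf Pw m).rej ⟨i, j⟩ := by
        by_contra hc
        have h2 := hmax w'' hc
        letI := Pf ⟨i, j⟩
        exact absurd h2 (not_le.2 hlt)
      -- the moment w'' rejected ⟨i,j⟩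
      have hQex : ∃ s, w'' ∈ (DAaux.stSeq Pf Pw s).rej ⟨i, j⟩ := ⟨m, hrej⟩
      have hQ := Nat.find_spec hQex
      have hq1 : 1 ≤ Nat.find hQex := by
        rcases Nat.eq_zero_or_pos (Nat.find hQex) with h0 | h1
        · exfalso; rw [h0] at hQ; simp [DAaux.stSeq] at hQ
        · exact h1
      obtain ⟨s, hs⟩ : ∃ s, Nat.find hQex = s + 1 := ⟨Nat.find hQex - 1, by omega⟩
      have hsm : s + 1 ≤ m := by
        have h2 := Nat.find_min' hQex hrej
        omega
      have hnotrej : w'' ∉ (DAaux.stSeq Pf Pw s).rej ⟨i, j⟩ :=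
        Nat.find_min hQex (by omega)
      have hmem : w'' ∈ (DAaux.stSeq Pf Pw (s + 1)).rej ⟨i, j⟩ := by
        rw [← hs]; exact hQ
      rw [DAaux.stSeq_succ, DAaux.step_rej_iff] at hmem
      rcases hmem with hmem | ⟨hpred, hne'⟩
      · exact hnotrej hmem
      have hltc : (Pw w'').lt (some ⟨i, j⟩)
          (chosenByWorker Pf Pw (DAaux.stSeq Pf Pw s) w'') := by
        letI := Pw w''
        exact lt_of_le_of_ne (DAaux.chosen_ge_of_pred Pf Pw hpred) (Ne.symm hne')
      have hcp : DAaux.partnerSt (DAaux.stSeq Pf Pw (s + 1)) w'' =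
          chosenByWorker Pf Pw (DAaux.stSeq Pf Pw s) w'' := by
        rw [DAaux.stSeq_succ]; exact DAaux.partnerSt_step Pf Pw _ w''
      have hltq : (Pw w'').lt (some ⟨i, j⟩)
          (DAaux.partnerSt (DAaux.stSeq Pf Pw m) w'') := by
        letI := Pw w''
        exact lt_of_lt_of_le (hcp ▸ hltc) (DAaux.partner_mono_le Pf Pw hsm w'')
      have hfin : DAaux.partnerSt (DAaux.stSeq Pf Pw N) w'' = some ⟨i, j'⟩ := by
        obtain ⟨M, hM⟩ : ∃ M, N = M + 1 := ⟨N - 1, by omega⟩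
        rw [hM] at hj'2 ⊢
        rw [DAaux.stSeq_succ] at hj'2 ⊢
        rw [DAaux.partnerSt_step]
        rw [DAaux.step_lam_iff] at hj'2
        exact hj'2
      have hmono2 : (Pw w'').le (DAaux.partnerSt (DAaux.stSeq Pf Pw m) w'')
          (some ⟨i, j'⟩) := by
        rw [← hfin]
        exact DAaux.partner_mono_le Pf Pw (le_of_lt hSltN) w''
      cases hq : DAaux.partnerSt (DAaux.stSeq Pf Pw m) w'' with
      | none =>
        rw [hq] at hltq hmono2
        letI := Pw w''
        have h1 : ¬ (Pw w'').lt none (some ⟨i, j⟩) := lt_asymm hltq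
        have h2 : ¬ (Pw w'').lt none (some (⟨i, j'⟩ : Σ i : ι, Fin (J i))) := fun hx =>
          h1 ((hcond0 w'' i j).1 ((hcond0 w'' i j').2 hx))
        have h3 := le_antisymm hmono2 (not_lt.1 h2)
        exact absurd h3 (by simp)
      | some g =>
        obtain ⟨i2, k⟩ := g
        rw [hq] at hltq hmono2
        by_cases hi : i2 = i
        · subst hi
          exact hauth k w'' (DAaux.partnerSt_lam hq) hlt
        · have hfirm : (PwFirm w'').lt (some i) (some i2) := by
            letI := PwFirm w''
            rcases lt_trichotomy (some i : Option ι) (some i2) with h | h | h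
            · exact h
            · exact absurd (Option.some.inj h) (fun hh => hi hh.symm)
            · letI := Pw w''
              exact absurd hltq (lt_asymm (hcond1 w'' i i2 j k h))
          letI := Pw w''
          exact absurd hmono2 (not_le.2 (hcond1 w'' i2 i k j' hfirm))

end
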